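/- Let f and g be homogeneous real polynomials in two variables of the same degree k ≥ 1, and suppose their Jacobian determinant vanishes identically: ∂f/∂x₁·∂g/∂x₂ − ∂f/∂x₂·∂g/∂x₁ = 0 for all x ∈ ℝ². Then f and g are linearly dependent: there exist real numbers (a, b) ≠ (0, 0) with a·f + b·g = 0 identically. -/

import Mathlib

open MvPolynomial


section OneVar
open Polynomial

lemma wdep (h q : Polynomial ℝ) (hw : h * derivative q = q * derivative h) :
    ∃ a b : ℝ, ¬(a = 0 ∧ b = 0) ∧ Polynomial.C a * h + Polynomial.C b * q = 0 := by
  rcases eq_or_ne h 0 with rfl | hh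
  · exact ⟨1, 0, by simp, by simp⟩
  rcases eq_or_ne q 0 with rfl | hq
  · exact ⟨0, 1, by simp, by simp⟩
  set d := GCDMonoid.gcd h q with hd
  have hd0 : d ≠ 0 := gcd_ne_zero_of_left hh
  set u := h / d with hu
  set v := q / d with hv
  have hud : d * u = h := EuclideanDomain.mul_div_cancel' hd0 (gcd_dvd_left h q)
  have hvd : d * v = q := EuclideanDomain.mul_div_cancel' hd0 (gcd_dvd_right h q)
  have hcop : IsCoprime u v := isCoprime_div_gcd_div_gcd hq
  clear_value d u v
  have hu0 : u ≠ 0 := by rintro rfl; simp at hud; exact hh hud.symm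
  have hv0 : v ≠ 0 := by rintro rfl; simp at hvd; exact hq hvd.symm
  have key : u * derivative v = v * derivative u := by
    have := hw
    rw [← hud, ← hvd] at this
    have h2 : d * (d * (u * derivative v)) = d * (d * (v * derivative u)) := by
      rw [derivative_mul, derivative_mul] at this
      ring_nf at this ⊢
      linear_combination this
    exact mul_left_cancel₀ hd0 (mul_left_cancel₀ hd0 h2)
  have hdu : u ∣ derivative u := by
    have : u ∣ v * derivative u := ⟨derivative v, key.symm⟩
    exact hcop.dvd_of_dvd_mul_left this
  have hdv : v ∣ derivative v := by
    have : v ∣ u * derivative v := ⟨derivative u, key⟩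
    exact hcop.symm.dvd_of_dvd_mul_left this
  have hu' : derivative u = 0 := by
    by_contra hne
    exact absurd (degree_le_of_dvd hdu hne) (not_le.2 (degree_derivative_lt hu0))
  have hv' : derivative v = 0 := by
    by_contra hne
    exact absurd (degree_le_of_dvd hdv hne) (not_le.2 (degree_derivative_lt hv0))
  obtain ⟨c, rfl⟩ : ∃ c, u = Polynomial.C c := ⟨u.coeff 0, eq_C_of_derivative_eq_zero hu'⟩
  obtain ⟨e, rfl⟩ : ∃ e, v = Polynomial.C e := ⟨v.coeff 0, eq_C_of_derivative_eq_zero hv'⟩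
  have hc : c ≠ 0 := by rintro rfl; simp at hu0
  refine ⟨e, -c, fun ⟨_, hb⟩ => hc (neg_eq_zero.mp hb), ?_⟩
  rw [← hud, ← hvd, map_neg]; ring
end OneVar

lemma xpd (i : Fin 2) (s : Fin 2 →₀ ℕ) (a : ℝ) :
    X i * pderiv i (monomial s a) = C (s i : ℝ) * monomial s a := by
  rw [pderiv_monomial, C_mul_monomial]
  rcases Nat.eq_zero_or_pos (s i) with h | h
  · simp [h]
  · have hs : Finsupp.single i 1 + (s - Finsupp.single i 1) = s := by
      ext j
      simp only [Finsupp.add_apply, Finsupp.tsub_apply, Finsupp.single_apply]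
      rcases eq_or_ne i j with rfl | hij
      · simp; omega
      · simp [hij]
    rw [X, monomial_mul, one_mul, hs, mul_comm]

lemma euler2 {k : ℕ} {f : MvPolynomial (Fin 2) ℝ} (hf : f.IsHomogeneous k) :
    X 0 * pderiv 0 f + X 1 * pderiv 1 f = C (k : ℝ) * f := by
  have key : ∀ i : Fin 2, X i * pderiv i f
      = ∑ d ∈ f.support, C ((d i : ℝ)) * monomial d (coeff d f) := by
    intro i
    conv_lhs => rw [f.as_sum]
    rw [map_sum, Finset.mul_sum]
    exact Finset.sum_congr rfl fun d _ => xpd i d _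
  rw [key 0, key 1, ← Finset.sum_add_distrib]
  conv_rhs => rw [f.as_sum]
  rw [Finset.mul_sum]
  refine Finset.sum_congr rfl fun d hd => ?_
  have hc : coeff d f ≠ 0 := mem_support_iff.mp hd
  have hdeg : d.degree = k := by
    have := hf hc
    rwa [Pi.one_def, ← Finsupp.degree_eq_weight_one] at this
  have h01 : d 0 + d 1 = k := by
    rw [← hdeg, Finsupp.degree_apply]
    rw [show (∑ i ∈ d.support, d i) = ∑ i : Fin 2, d i from
      Finset.sum_subset (Finset.subset_univ _)
        (fun x _ hx => Finsupp.notMem_support_iff.mp hx), Fin.sum_univ_two]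
  rw [← add_mul, ← map_add, ← Nat.cast_add, h01]

noncomputable def psi : MvPolynomial (Fin 2) ℝ →ₐ[ℝ] Polynomial ℝ :=
  aeval ![1, Polynomial.X]

lemma psi_pderiv (p : MvPolynomial (Fin 2) ℝ) :
    psi (pderiv 1 p) = Polynomial.derivative (psi p) := by
  induction p using MvPolynomial.induction_on with
  | C a => simp [psi]
  | add p q hp hq => simp [map_add, hp, hq]
  | mul_X p i hp =>
    rcases eq_or_ne i 1 with rfl | hi
    · rw [pderiv_mul, pderiv_X_self, map_add, map_mul, map_mul, hp]
      simp [psi, Polynomial.derivative_mul]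
    · have hi0 : i = 0 := by
        have h2 := i.isLt
        have h3 : i.val ≠ 1 := fun h => hi (Fin.ext h)
        exact Fin.ext (by omega)
      subst hi0
      rw [pderiv_mul, pderiv_X_of_ne (by decide), map_add, map_mul, map_mul, hp]
      simp [psi]

lemma psi_monomial (e : Fin 2 →₀ ℕ) (c : ℝ) :
    psi (monomial e c) = Polynomial.C c * Polynomial.X ^ (e 1) := by
  rw [psi, aeval_monomial]
  have : (∏ i ∈ e.support, (![(1 : Polynomial ℝ), Polynomial.X] i) ^ e i)
      = ∏ i : Fin 2, (![(1 : Polynomial ℝ), Polynomial.X] i) ^ e i :=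
    Finset.prod_subset (Finset.subset_univ _)
      (fun x _ hx => by rw [Finsupp.notMem_support_iff.mp hx, pow_zero])
  rw [Finsupp.prod, this, Fin.prod_univ_two]
  simp [Polynomial.algebraMap_eq]

lemma psi_inj {k : ℕ} {p : MvPolynomial (Fin 2) ℝ} (hp : p.IsHomogeneous k)
    (h : psi p = 0) : p = 0 := by
  ext d
  rw [coeff_zero]
  by_contra hc
  have hd : d ∈ p.support := mem_support_iff.mpr hc
  have hps : psi p = ∑ e ∈ p.support, Polynomial.C (coeff e p) * Polynomial.X ^ (e 1) := by
    conv_lhs => rw [p.as_sum]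
    rw [map_sum]
    exact Finset.sum_congr rfl fun e _ => psi_monomial e _
  have hco : Polynomial.coeff (psi p) (d 1) = coeff d p := by
    rw [hps, Polynomial.finset_sum_coeff]
    rw [Finset.sum_eq_single_of_mem d hd]
    · simp [Polynomial.coeff_C_mul, Polynomial.coeff_X_pow]
    · intro e he hne
      rw [Polynomial.coeff_C_mul, Polynomial.coeff_X_pow]
      have h1 : e 1 ≠ d 1 := by
        intro h11
        apply hne
        have hdegd : d 0 + d 1 = k := by
          have := hp hc
          rw [Pi.one_def, ← Finsupp.degree_eq_weight_one] at this
          rw [← this, Finsupp.degree_apply,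
            show (∑ i ∈ d.support, d i) = ∑ i : Fin 2, d i from
              Finset.sum_subset (Finset.subset_univ _)
                (fun x _ hx => Finsupp.notMem_support_iff.mp hx), Fin.sum_univ_two]
        have hdege : e 0 + e 1 = k := by
          have := hp (mem_support_iff.mp he)
          rw [Pi.one_def, ← Finsupp.degree_eq_weight_one] at this
          rw [← this, Finsupp.degree_apply,
            show (∑ i ∈ e.support, e i) = ∑ i : Fin 2, e i from
              Finset.sum_subset (Finset.subset_univ _)
                (fun x _ hx => Finsupp.notMem_support_iff.mp hx), Fin.sum_univ_two]
        ext j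
        fin_cases j
        · show e 0 = d 0; omega
        · exact h11
      rw [if_neg (Ne.symm h1), mul_zero]
  rw [h, Polynomial.coeff_zero] at hco
  exact hc hco.symm
/-- Two homogeneous polynomials of the same degree `k ≥ 1` in two variables
whose Jacobian determinant vanishes identically are linearly dependent. -/
theorem stmt_14 (k : ℕ) (hk : 1 ≤ k) (f g : MvPolynomial (Fin 2) ℝ)
    (hf : f.IsHomogeneous k) (hg : g.IsHomogeneous k)
    (hjac : ∀ x : Fin 2 → ℝ,
      eval x (pderiv 0 f) * eval x (pderiv 1 g) -
        eval x (pderiv 1 f) * eval x (pderiv 0 g) = 0) :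
    ∃ a b : ℝ, ¬(a = 0 ∧ b = 0) ∧ C a * f + C b * g = 0 := by
  have hk0 : (k : ℝ) ≠ 0 := Nat.cast_ne_zero.mpr (by omega)
  -- Step 1: pointwise `f * ∂₁g = g * ∂₁f`
  have hpt : ∀ x : Fin 2 → ℝ,
      eval x f * eval x (pderiv 1 g) = eval x g * eval x (pderiv 1 f) := by
    intro x
    have ef := congrArg (eval x) (euler2 hf)
    have eg := congrArg (eval x) (euler2 hg)
    simp only [map_add, map_mul, eval_X, eval_C] at ef eg
    have hJ := hjac x
    have key : (k : ℝ) * (eval x f * eval x (pderiv 1 g)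
        - eval x g * eval x (pderiv 1 f))
        = x 0 * (eval x (pderiv 0 f) * eval x (pderiv 1 g)
          - eval x (pderiv 1 f) * eval x (pderiv 0 g)) := by
      linear_combination eval x (pderiv 1 f) * eg - eval x (pderiv 1 g) * ef
    rw [hJ, mul_zero] at key
    have := mul_eq_zero.mp key
    rcases this with h | h
    · exact absurd h hk0
    · linarith [sub_eq_zero.mp h]
  -- Step 2: polynomial identity
  have hw : f * pderiv 1 g = g * pderiv 1 f := by
    apply MvPolynomial.funext
    intro x
    simp only [eval_mul]
    exact hpt x
  -- Step 3: transport to one variable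
  have hw1 : psi f * Polynomial.derivative (psi g)
      = psi g * Polynomial.derivative (psi f) := by
    have := congrArg psi hw
    simpa only [map_mul, psi_pderiv] using this
  obtain ⟨a, b, hab, hrel⟩ := wdep (psi f) (psi g) hw1
  refine ⟨a, b, hab, ?_⟩
  have hqh : (C a * f + C b * g).IsHomogeneous k := by
    have h1 : (C a * f).IsHomogeneous k := by
      simpa using (isHomogeneous_C (Fin 2) a).mul hf
    have h2 : (C b * g).IsHomogeneous k := by
      simpa using (isHomogeneous_C (Fin 2) b).mul hg
    exact h1.add h2
  apply psi_inj hqh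
  simpa only [map_add, map_mul, psi, aeval_C, algebraMap_eq, ← Polynomial.algebraMap_eq] using hrel
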